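/- Every planar orthogonal drawing of the complete graph K4 on four vertices has at least four bends in total and contains an edge with at least two bends. -/

import Mathlib

open SimpleGraph

/-- Points of the plane. -/
abbrev Pt : Type := ℝ × ℝ

/-- The segments of a polyline given by its list of corner points. -/
def segsOf (l : List Pt) : List (Pt × Pt) := l.zip l.tail

/-- The set of points covered by a polyline. -/
def chainTrace (l : List Pt) : Set Pt := ⋃ s ∈ segsOf l, segment ℝ s.1 s.2

/-- A nondegenerate axis-parallel (horizontal or vertical) segment. -/
def AxisSeg (p q : Pt) : Prop := p ≠ q ∧ (p.1 = q.1 ∨ p.2 = q.2)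

/-- Consecutive triples of a list. -/
def triplesOf (l : List Pt) : List (Pt × Pt × Pt) := l.zip (l.tail.zip l.tail.tail)

/-- Two consecutive axis-parallel segments meeting perpendicularly (a genuine corner). -/
def PerpCorner (p q r : Pt) : Prop := (p.1 = q.1 ∧ q.2 = r.2) ∨ (p.2 = q.2 ∧ q.1 = r.1)

/-- Every interior point of the polyline is a genuine (90 degree) corner. -/
def Alternating (l : List Pt) : Prop := ∀ t ∈ triplesOf l, PerpCorner t.1 t.2.1 t.2.2

/-- The cross product of the two direction vectors at an interior corner. -/
def crossVal (p q r : Pt) : ℝ := (q.1 - p.1) * (r.2 - q.2) - (q.2 - p.2) * (r.1 - q.1)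

open Classical in
/-- `1` for a left (counterclockwise) turn, `-1` for a right (clockwise) turn, `0` if straight. -/
noncomputable def turnVal (p q r : Pt) : ℤ :=
  if 0 < crossVal p q r then 1 else if crossVal p q r < 0 then -1 else 0

/-- The list of turn values at the interior points of a polyline. -/
noncomputable def turnVals (l : List Pt) : List ℤ :=
  (triplesOf l).map fun t => turnVal t.1 t.2.1 t.2.2

/-- The turn number of a polyline: the absolute value of the difference between
the number of right turns and the number of left turns along it. -/
noncomputable def turnNumber (l : List Pt) : ℕ := (turnVals l).sum.natAbs

/-- A simple polyline: non-adjacent segments are disjoint, adjacent segments share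
exactly their common endpoint. -/
def SimpleChain (l : List Pt) : Prop :=
  ∀ i j : Fin (segsOf l).length, (i : ℕ) < (j : ℕ) →
    segment ℝ ((segsOf l).get i).1 ((segsOf l).get i).2 ∩
      segment ℝ ((segsOf l).get j).1 ((segsOf l).get j).2 ⊆
      (if (j : ℕ) = (i : ℕ) + 1 then {((segsOf l).get j).1} else (∅ : Set Pt))

/-- The union of the unbounded connected components of the complement of `S`
(the outer face of a drawing whose trace is `S`). -/
def outerPart (S : Set Pt) : Set Pt :=
  {p | p ∉ S ∧ ¬ Bornology.IsBounded (connectedComponentIn Sᶜ p)}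

variable {V : Type}

/-- The degree of a vertex. -/
noncomputable def degOf (G : SimpleGraph V) (v : V) : ℕ := (G.neighborSet v).ncard

/-- A biconnected graph: at least three vertices and no cut vertex. -/
def Biconnected (G : SimpleGraph V) : Prop :=
  G.Connected ∧ 3 ≤ Nat.card V ∧
    ∀ v : V, (((⊤ : G.Subgraph).deleteVerts {v}).coe).Connected

/-- A planar polygonal drawing of a simple graph `G`: vertices are mapped to distinct
points, each edge to a simple polygonal curve joining the points of its endpoints
(described by the list of its interior corners, i.e. bends), and curves of distinct
edges meet only at points of shared endpoints. -/
structure PolyDrawing (G : SimpleGraph V) where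
  pos : V → Pt
  pos_inj : Function.Injective pos
  bends : V → V → List Pt
  bends_symm : ∀ u v : V, bends v u = (bends u v).reverse
  edge_nondeg : ∀ u v : V, G.Adj u v →
    (pos u :: (bends u v ++ [pos v])).Chain' (· ≠ ·)
  edge_simple : ∀ u v : V, G.Adj u v →
    SimpleChain (pos u :: (bends u v ++ [pos v]))
  edges_disjoint : ∀ u v x y : V, G.Adj u v → G.Adj x y → s(u, v) ≠ s(x, y) →
    chainTrace (pos u :: (bends u v ++ [pos v])) ∩
      chainTrace (pos x :: (bends x y ++ [pos y])) ⊆ pos '' (({u, v} : Set V) ∩ {x, y})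
  vertex_off_edges : ∀ w u v : V, G.Adj u v → w ≠ u → w ≠ v →
    pos w ∉ chainTrace (pos u :: (bends u v ++ [pos v]))

/-- A (finite simple) graph is planar iff it admits a planar polygonal drawing. -/
def GraphIsPlanar (G : SimpleGraph V) : Prop := Nonempty (PolyDrawing G)

/-- A planar orthogonal drawing: a planar polygonal drawing in which every segment of
every edge is horizontal or vertical and every interior corner of an edge is a genuine
bend (a 90 degree turn). -/
structure OrthoDrawing (G : SimpleGraph V) extends PolyDrawing G where
  edge_axis : ∀ u v : V, G.Adj u v → (pos u :: (bends u v ++ [pos v])).Chain' AxisSeg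
  edge_alt : ∀ u v : V, G.Adj u v → Alternating (pos u :: (bends u v ++ [pos v]))

namespace PolyDrawing

variable {G : SimpleGraph V}

/-- The polyline of the edge `(u,v)`, traversed from `u` to `v`. -/
def edgePts (Γ : PolyDrawing G) (u v : V) : List Pt := Γ.pos u :: (Γ.bends u v ++ [Γ.pos v])

/-- The set of points of the curve of edge `(u,v)`. -/
def edgeTrace (Γ : PolyDrawing G) (u v : V) : Set Pt := chainTrace (Γ.edgePts u v)

/-- The curve of edge `(u,v)` without its endpoints. -/
def openTrace (Γ : PolyDrawing G) (u v : V) : Set Pt :=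
  Γ.edgeTrace u v \ {Γ.pos u, Γ.pos v}

/-- The set of points of the whole drawing. -/
def drawTrace (Γ : PolyDrawing G) : Set Pt :=
  ⋃ (p : V × V) (_ : G.Adj p.1 p.2), Γ.edgeTrace p.1 p.2

/-- The number of bends of an edge. -/
noncomputable def bendCount (Γ : PolyDrawing G) : Sym2 V → ℕ :=
  Sym2.lift ⟨fun u v => (Γ.bends u v).length, fun u v => by
    simp only [Γ.bends_symm u v, List.length_reverse]⟩

/-- The total number of bends of a drawing. -/
noncomputable def totalBends [Fintype V] (Γ : PolyDrawing G) : ℕ :=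
  ∑ e ∈ (Set.toFinite G.edgeSet).toFinset, Γ.bendCount e

/-- A point lies on the outer face of the drawing. -/
def OnOuterFacePt (Γ : PolyDrawing G) (p : Pt) : Prop :=
  p ∈ frontier (outerPart Γ.drawTrace)

/-- The edge `(u,v)` lies on the outer face of the drawing. -/
def EdgeOnOuterFace (Γ : PolyDrawing G) (u v : V) : Prop :=
  Γ.edgeTrace u v ⊆ frontier (outerPart Γ.drawTrace)

/-- The polyline of a drawn walk. -/
def walkPts (Γ : PolyDrawing G) {u v : V} (w : G.Walk u v) : List Pt :=
  Γ.pos u :: (w.darts.flatMap fun d => Γ.bends d.toProd.1 d.toProd.2 ++ [Γ.pos d.toProd.2])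

/-- The turn number `t(p)` of a drawn walk. -/
noncomputable def walkTurnNumber (Γ : PolyDrawing G) {u v : V} (w : G.Walk u v) : ℕ :=
  turnNumber (Γ.walkPts w)

/-- The set of points of the drawing of a cycle. -/
def cycleTrace (Γ : PolyDrawing G) {x : V} (c : G.Walk x x) : Set Pt :=
  ⋃ d ∈ c.darts, Γ.edgeTrace d.toProd.1 d.toProd.2

/-- The (open) region enclosed by the drawing of a cycle: the union of the bounded
connected components of the complement of its trace. -/
def cycInside (Γ : PolyDrawing G) {x : V} (c : G.Walk x x) : Set Pt :=
  {p | p ∉ Γ.cycleTrace c ∧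
    Bornology.IsBounded (connectedComponentIn (Γ.cycleTrace c)ᶜ p)}

/-- The region outside the drawing of a cycle. -/
def cycOutside (Γ : PolyDrawing G) {x : V} (c : G.Walk x x) : Set Pt :=
  {p | p ∉ Γ.cycleTrace c ∧
    ¬ Bornology.IsBounded (connectedComponentIn (Γ.cycleTrace c)ᶜ p)}

/-- The edge `(u,v)` is embedded outside the cycle `c`. -/
def EdgeOutside (Γ : PolyDrawing G) {x : V} (c : G.Walk x x) (u v : V) : Prop :=
  Γ.openTrace u v ⊆ Γ.cycOutside c

/-- The edge `(u,v)` is embedded inside the cycle `c`. -/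
def EdgeInside (Γ : PolyDrawing G) {x : V} (c : G.Walk x x) (u v : V) : Prop :=
  Γ.openTrace u v ⊆ Γ.cycInside c

/-- `c` is the external cycle `C_o(G)` of the plane graph described by the drawing:
its trace is the boundary of the outer face. -/
def IsExternalCycle (Γ : PolyDrawing G) {x : V} (c : G.Walk x x) : Prop :=
  c.IsCycle ∧ Γ.cycleTrace c = frontier (outerPart Γ.drawTrace)

/-- `e` is a leg of the cycle `c`: an edge not in `G(c)` with exactly one endpoint on `c`. -/
def IsLegEdge (Γ : PolyDrawing G) {x : V} (c : G.Walk x x) (e : Sym2 V) : Prop :=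
  ∃ u v : V, e = s(u, v) ∧ G.Adj u v ∧ u ∈ c.support ∧ v ∉ c.support ∧ Γ.EdgeOutside c u v

/-- `u` is a leg-vertex of the cycle `c`. -/
def IsLegVertex (Γ : PolyDrawing G) {x : V} (c : G.Walk x x) (u : V) : Prop :=
  ∃ w : V, G.Adj u w ∧ u ∈ c.support ∧ w ∉ c.support ∧ Γ.EdgeOutside c u w

/-- `c` is a `k`-legged cycle: it has exactly `k` legs and no edge embedded outside `c`
joins two of its vertices. -/
def IsKLegged (Γ : PolyDrawing G) {x : V} (c : G.Walk x x) (k : ℕ) : Prop :=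
  {e : Sym2 V | Γ.IsLegEdge c e}.ncard = k ∧
    ∀ u v : V, G.Adj u v → u ∈ c.support → v ∈ c.support → ¬ Γ.EdgeOutside c u v

/-- The edge `(u,v)` belongs to `G(c)` (the cycle `c` together with everything inside). -/
def EdgeInGC (Γ : PolyDrawing G) {x : V} (c : G.Walk x x) (u v : V) : Prop :=
  s(u, v) ∈ c.edges ∨ Γ.EdgeInside c u v

/-- The initial direction of a drawn walk. -/
def startDir (Γ : PolyDrawing G) {u v : V} (w : G.Walk u v) : Pt :=
  (Γ.walkPts w).tail.headI - Γ.pos u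

/-- The common start `u` of the two contour paths `pl, pr` is a convex (90 degree)
external corner of the drawing of `G(c)`: points slightly inside the wedge of the two
initial directions belong to the region enclosed by the cycle. -/
def PoleConvex (Γ : PolyDrawing G) {x : V} (c : G.Walk x x) {u v : V}
    (pl pr : G.Walk u v) : Prop :=
  ∃ δ : ℝ, 0 < δ ∧ ∀ t : ℝ, 0 < t → t < δ →
    Γ.pos u + t • (Γ.startDir pl + Γ.startDir pr) ∈ Γ.cycInside c

/-- `pl` and `pr` are the two contour paths from `u` to `v` of the drawing of `G(c)`
(for a 2-legged cycle `c` whose leg-vertices are `u` and `v`), with the poles at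
convex corners of the boundary. -/
def ContourPair (Γ : PolyDrawing G) {x : V} (c : G.Walk x x) {u v : V}
    (pl pr : G.Walk u v) : Prop :=
  pl.IsPath ∧ pr.IsPath ∧ (∀ e : Sym2 V, e ∈ pl.edges → e ∉ pr.edges) ∧
    (∀ e : Sym2 V, e ∈ c.edges ↔ (e ∈ pl.edges ∨ e ∈ pr.edges)) ∧
    Γ.PoleConvex c pl pr ∧ Γ.PoleConvex c pl.reverse pr.reverse

/-- The drawing of `G(c)` is X-shaped with poles `u` and `v`. -/
def IsXShaped (Γ : PolyDrawing G) {x : V} (c : G.Walk x x) (u v : V) : Prop :=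
  ∃ pl pr : G.Walk u v, Γ.ContourPair c pl pr ∧
    Γ.walkTurnNumber pl = 1 ∧ Γ.walkTurnNumber pr = 1

/-- The drawing of `G(c)` is D-shaped with poles `u` and `v`. -/
def IsDShaped (Γ : PolyDrawing G) {x : V} (c : G.Walk x x) (u v : V) : Prop :=
  ∃ pl pr : G.Walk u v, Γ.ContourPair c pl pr ∧
    Γ.walkTurnNumber pl = 0 ∧ Γ.walkTurnNumber pr = 2

/-- Two drawings define the same planar embedding (same set of faces and same external
face): some homeomorphism of the plane maps one onto the other, vertexwise and edgewise. -/
def SameEmbedding (Γ₀ Γ : PolyDrawing G) : Prop :=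
  ∃ h : Pt ≃ₜ Pt, (∀ v : V, h (Γ₀.pos v) = Γ.pos v) ∧
    ∀ u v : V, G.Adj u v → h '' Γ₀.edgeTrace u v = Γ.edgeTrace u v

end PolyDrawing

/-- Conditions (i), (ii), (iii) of Rahman-Nishizeki-Naznin for a biconnected plane
3-graph given by the drawing `Γ`. -/
def RNConditions (G : SimpleGraph V) (Γ : PolyDrawing G) : Prop :=
  (∀ (x : V) (c : G.Walk x x), Γ.IsExternalCycle c →
      4 ≤ {v : V | v ∈ c.support ∧ degOf G v = 2}.ncard) ∧
  (∀ (x : V) (c : G.Walk x x), c.IsCycle → Γ.IsKLegged c 2 →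
      2 ≤ {v : V | v ∈ c.support ∧ degOf G v = 2}.ncard) ∧
  (∀ (x : V) (c : G.Walk x x), c.IsCycle → Γ.IsKLegged c 3 →
      1 ≤ {v : V | v ∈ c.support ∧ degOf G v = 2}.ncard)

-- ============ my development ============
namespace K4Proof

variable (Γ : OrthoDrawing (⊤ : SimpleGraph (Fin 4)))

/-- The polyline of edge (u,v). -/
def ePts (u v : Fin 4) : List Pt := Γ.pos u :: (Γ.bends u v ++ [Γ.pos v])

lemma ePts_length (u v : Fin 4) : (ePts Γ u v).length = (Γ.bends u v).length + 2 := by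
  simp [ePts]

lemma chain_axis {u v : Fin 4} (h : u ≠ v) : (ePts Γ u v).Chain' AxisSeg :=
  Γ.edge_axis u v (by simpa using h)

lemma alt_edge {u v : Fin 4} (h : u ≠ v) : Alternating (ePts Γ u v) :=
  Γ.edge_alt u v (by simpa using h)

/-- The finite set of all corner points (vertices and bends) of the drawing. -/
noncomputable def corners : Finset Pt :=
  Finset.univ.biUnion (fun uv : Fin 4 × Fin 4 =>
    (ePts Γ uv.1 uv.2).toFinset.filter (fun _ => uv.1 ≠ uv.2))

lemma mem_corners {p : Pt} :
    p ∈ corners Γ ↔ ∃ u v : Fin 4, u ≠ v ∧ p ∈ ePts Γ u v := by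
  simp only [corners, Finset.mem_biUnion, Finset.mem_filter, List.mem_toFinset,
    Finset.mem_univ, true_and]
  constructor
  · rintro ⟨⟨u, v⟩, hm, hne⟩; exact ⟨u, v, hne, hm⟩
  · rintro ⟨u, v, hne, hm⟩; exact ⟨⟨u, v⟩, hm, hne⟩

lemma pos_mem_corners (w : Fin 4) : Γ.pos w ∈ corners Γ := by
  rw [mem_corners]
  refine ⟨w, if w = 0 then 1 else 0, ?_, by simp [ePts]⟩
  split_ifs with h
  · subst h; decide
  · exact h

lemma corners_nonempty : (corners Γ).Nonempty := ⟨_, pos_mem_corners Γ 0⟩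

/-- Maximum of a linear functional over the corners. -/
noncomputable def fmax (α β : ℝ) : ℝ :=
  ((corners Γ).image (fun p => α * p.1 + β * p.2)).max'
    ((corners_nonempty Γ).image _)

lemma le_fmax (α β : ℝ) {q : Pt} (hq : q ∈ corners Γ) :
    α * q.1 + β * q.2 ≤ fmax Γ α β := by
  exact Finset.le_max' ((corners Γ).image (fun p => α * p.1 + β * p.2)) _
    (Finset.mem_image_of_mem _ hq)

lemma exists_fmax (α β : ℝ) : ∃ p ∈ corners Γ, α * p.1 + β * p.2 = fmax Γ α β := by
  have := Finset.max'_mem _ (((corners_nonempty Γ)).image (fun p => α * p.1 + β * p.2))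
  rw [Finset.mem_image] at this
  obtain ⟨p, hp, hpe⟩ := this
  exact ⟨p, hp, hpe⟩

/-- Convex parametrization of a point on a ray segment. -/
lemma seg_param (p d : Pt) {s t : ℝ} (h0 : 0 ≤ s) (hst : s ≤ t) :
    p + s • d ∈ segment ℝ p (p + t • d) := by
  rcases eq_or_lt_of_le (h0.trans hst) with h | h
  · have hs : s = 0 := le_antisymm (hst.trans h.symm.le) h0
    subst hs; simpa using left_mem_segment ℝ p (p + t • d)
  · have ht : t ≠ 0 := ne_of_gt h
    refine ⟨1 - s / t, s / t, ?_, by positivity, by ring, ?_⟩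
    · have : s / t ≤ 1 := (div_le_one h).mpr hst
      linarith
    · have hd : s / t * t = s := div_mul_cancel₀ s ht
      match_scalars <;> field_simp <;> ring

/-- The corner immediately after `pos u` along edge (u,v). -/
def nxt (u v : Fin 4) : Pt := (Γ.bends u v ++ [Γ.pos v]).headI

lemma nxt_cons (u v : Fin 4) :
    ∃ rs, Γ.bends u v ++ [Γ.pos v] = nxt Γ u v :: rs := by
  cases h : Γ.bends u v ++ [Γ.pos v] with
  | nil => exact absurd h (by simp)
  | cons a l => exact ⟨l, by rw [nxt, h]; rfl⟩

lemma axis_first {u v : Fin 4} (h : u ≠ v) : AxisSeg (Γ.pos u) (nxt Γ u v) := by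
  obtain ⟨rs, hrs⟩ := nxt_cons Γ u v
  have hc := chain_axis Γ h
  rw [ePts, hrs] at hc
  exact (List.isChain_cons_cons.mp hc).1

lemma seg_first_sub (u v : Fin 4) :
    segment ℝ (Γ.pos u) (nxt Γ u v) ⊆ chainTrace (ePts Γ u v) := by
  obtain ⟨rs, hrs⟩ := nxt_cons Γ u v
  intro z hz
  have hmem : (Γ.pos u, nxt Γ u v) ∈ segsOf (ePts Γ u v) := by
    rw [ePts, hrs]
    simp [segsOf]
  exact Set.mem_iUnion₂.mpr ⟨(Γ.pos u, nxt Γ u v), hmem, hz⟩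

lemma nxt_mem_corners {u v : Fin 4} (h : u ≠ v) : nxt Γ u v ∈ corners Γ := by
  obtain ⟨rs, hrs⟩ := nxt_cons Γ u v
  rw [mem_corners]
  exact ⟨u, v, h, by rw [ePts, hrs]; simp⟩

lemma no_same_ray_core {w x y : Fin 4} (hwx : w ≠ x) (hwy : w ≠ y) (hxy : x ≠ y)
    (d : Pt) {t₁ t₂ : ℝ} (h1 : 0 < t₁) (hle : t₁ ≤ t₂)
    (e1 : nxt Γ w x = Γ.pos w + t₁ • d) (e2 : nxt Γ w y = Γ.pos w + t₂ • d) : False := by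
  have hz1 : nxt Γ w x ∈ chainTrace (ePts Γ w x) :=
    seg_first_sub Γ w x (right_mem_segment ℝ _ _)
  have hz2 : nxt Γ w x ∈ chainTrace (ePts Γ w y) := by
    apply seg_first_sub Γ w y
    rw [e1, e2]
    exact seg_param _ _ h1.le hle
  have hne : s(w, x) ≠ s(w, y) := by
    rw [Ne, Sym2.eq_iff]
    push_neg
    exact ⟨fun _ => hxy, fun h _ => hwy h⟩
  have hsub := Γ.edges_disjoint w x w y (by simpa using hwx) (by simpa using hwy) hne
  have hz : nxt Γ w x ∈ Γ.pos '' (({w, x} : Set (Fin 4)) ∩ {w, y}) :=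
    hsub ⟨hz1, hz2⟩
  obtain ⟨ω, ⟨hω1, hω2⟩, hωz⟩ := hz
  have hωw : ω = w := by
    rcases hω1 with rfl | rfl
    · rfl
    · rcases hω2 with rfl | rfl
      · exact absurd rfl hwx
      · exact absurd rfl hxy
  subst hωw
  exact (axis_first Γ hwx).1 hωz

lemma no_same_ray {w x y : Fin 4} (hwx : w ≠ x) (hwy : w ≠ y) (hxy : x ≠ y)
    (d : Pt) {t₁ t₂ : ℝ} (h1 : 0 < t₁) (h2 : 0 < t₂)
    (e1 : nxt Γ w x = Γ.pos w + t₁ • d) (e2 : nxt Γ w y = Γ.pos w + t₂ • d) : False := by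
  rcases le_total t₁ t₂ with h | h
  · exact no_same_ray_core Γ hwx hwy hxy d h1 h e1 e2
  · exact no_same_ray_core Γ hwy hwx hxy.symm d h2 h e2 e1

lemma three_pigeon (w : Fin 4) (d₁ d₂ : Pt)
    (H : ∀ x : Fin 4, x ≠ w → ∃ t : ℝ, 0 < t ∧
      (nxt Γ w x = Γ.pos w + t • d₁ ∨ nxt Γ w x = Γ.pos w + t • d₂)) : False := by
  classical
  have hcard : (Finset.univ : Finset Bool).card < (Finset.univ.erase w).card := by
    simp [Finset.card_erase_of_mem]
  obtain ⟨x, hx, y, hy, hxy, hfeq⟩ :=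
    Finset.exists_ne_map_eq_of_card_lt_of_maps_to
      (f := fun z => decide (∃ t : ℝ, 0 < t ∧ nxt Γ w z = Γ.pos w + t • d₁))
      hcard (fun a _ => Finset.mem_univ _)
  have hxw : x ≠ w := Finset.ne_of_mem_erase hx
  have hyw : y ≠ w := Finset.ne_of_mem_erase hy
  by_cases hc : ∃ t : ℝ, 0 < t ∧ nxt Γ w x = Γ.pos w + t • d₁
  · have hcy : ∃ t : ℝ, 0 < t ∧ nxt Γ w y = Γ.pos w + t • d₁ := by
      have h1 : decide (∃ t : ℝ, 0 < t ∧ nxt Γ w x = Γ.pos w + t • d₁) = true :=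
        decide_eq_true hc
      rw [hfeq] at h1
      exact of_decide_eq_true h1
    obtain ⟨t₁, ht₁, E₁⟩ := hc
    obtain ⟨t₂, ht₂, E₂⟩ := hcy
    exact no_same_ray Γ hxw.symm hyw.symm hxy d₁ ht₁ ht₂ E₁ E₂
  · have hcy : ¬ ∃ t : ℝ, 0 < t ∧ nxt Γ w y = Γ.pos w + t • d₁ := by
      intro hcon
      apply hc
      have h1 : decide (∃ t : ℝ, 0 < t ∧ nxt Γ w y = Γ.pos w + t • d₁) = true :=
        decide_eq_true hcon
      rw [← hfeq] at h1
      exact of_decide_eq_true h1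
    obtain ⟨t₁, ht₁, E₁⟩ := H x hxw
    obtain ⟨t₂, ht₂, E₂⟩ := H y hyw
    rcases E₁ with E₁ | E₁
    · exact hc ⟨t₁, ht₁, E₁⟩
    rcases E₂ with E₂ | E₂
    · exact hcy ⟨t₂, ht₂, E₂⟩
    exact no_same_ray Γ hxw.symm hyw.symm hxy d₂ ht₁ ht₂ E₁ E₂

/-- A vertex position cannot maximize a (±1,±1) linear functional over all corners. -/
lemma vertex_not_max (α β : ℝ) (hα : α = 1 ∨ α = -1) (hβ : β = 1 ∨ β = -1) (w : Fin 4)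
    (h : ∀ q ∈ corners Γ, α * q.1 + β * q.2 ≤ α * (Γ.pos w).1 + β * (Γ.pos w).2) :
    False := by
  have hαα : α * α = 1 := by rcases hα with rfl | rfl <;> norm_num
  have hββ : β * β = 1 := by rcases hβ with rfl | rfl <;> norm_num
  have hα0 : α ≠ 0 := by rcases hα with rfl | rfl <;> norm_num
  have hβ0 : β ≠ 0 := by rcases hβ with rfl | rfl <;> norm_num
  apply three_pigeon Γ w (-α, 0) (0, -β)
  intro x hxw
  have hax := axis_first Γ (Ne.symm hxw)
  set q := nxt Γ w x with hq
  have hqc : q ∈ corners Γ := nxt_mem_corners Γ (Ne.symm hxw)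
  have hle := h q hqc
  obtain ⟨hne, hor⟩ := hax
  rcases hor with hvert | hhor
  · -- vertical first segment: use d₂ = (0, -β)
    have hy : q.2 ≠ (Γ.pos w).2 := fun hc => hne (Prod.ext hvert hc.symm)
    have hlt : β * (q.2 - (Γ.pos w).2) < 0 := by
      have h1 : α * q.1 = α * (Γ.pos w).1 := by rw [hvert]
      have h0 : β * (q.2 - (Γ.pos w).2) ≤ 0 := by nlinarith [hle, h1]
      exact lt_of_le_of_ne h0 (mul_ne_zero hβ0 (sub_ne_zero.mpr hy))
    refine ⟨β * ((Γ.pos w).2 - q.2), by nlinarith [hlt], Or.inr ?_⟩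
    have hsm : (β * ((Γ.pos w).2 - q.2)) • ((0:ℝ), -β) = ((0:ℝ), q.2 - (Γ.pos w).2) := by
      rw [Prod.smul_mk, Prod.mk.injEq]
      constructor
      · simp
      · simp only [smul_eq_mul]
        linear_combination (q.2 - (Γ.pos w).2) * hββ
    rw [hsm]
    exact Prod.ext (by simpa using hvert.symm) (by show q.2 = (Γ.pos w).2 + (q.2 - (Γ.pos w).2); ring)
  · -- horizontal first segment: use d₁ = (-α, 0)
    have hx1 : q.1 ≠ (Γ.pos w).1 := fun hc => hne (Prod.ext hc.symm hhor)
    have hlt : α * (q.1 - (Γ.pos w).1) < 0 := by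
      have h1 : β * q.2 = β * (Γ.pos w).2 := by rw [hhor]
      have h0 : α * (q.1 - (Γ.pos w).1) ≤ 0 := by nlinarith [hle, h1]
      exact lt_of_le_of_ne h0 (mul_ne_zero hα0 (sub_ne_zero.mpr hx1))
    refine ⟨α * ((Γ.pos w).1 - q.1), by nlinarith [hlt], Or.inl ?_⟩
    have hsm : (α * ((Γ.pos w).1 - q.1)) • (-α, (0:ℝ)) = (q.1 - (Γ.pos w).1, (0:ℝ)) := by
      rw [Prod.smul_mk, Prod.mk.injEq]
      constructor
      · simp only [smul_eq_mul]
        linear_combination (q.1 - (Γ.pos w).1) * hαα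
      · simp
    rw [hsm]
    exact Prod.ext (by show q.1 = (Γ.pos w).1 + (q.1 - (Γ.pos w).1); ring) (by simpa using hhor.symm)

/-- The k-th point of the polyline of edge (u,v) (with junk default). -/
noncomputable def elt (u v : Fin 4) (k : ℕ) : Pt := (ePts Γ u v).getD k default

/-- The bend at index `i` of edge (u,v) is a corner of the stated type
(for the functional α·x + β·y, a top corner in both directions). -/
def TokCond (α β : ℝ) (u v : Fin 4) (i : ℕ) : Prop :=
  ((elt Γ u v i).1 = (elt Γ u v (i+1)).1 ∧
    β * ((elt Γ u v i).2 - (elt Γ u v (i+1)).2) < 0 ∧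
    (elt Γ u v (i+2)).2 = (elt Γ u v (i+1)).2 ∧
    α * ((elt Γ u v (i+2)).1 - (elt Γ u v (i+1)).1) < 0)
  ∨ ((elt Γ u v i).2 = (elt Γ u v (i+1)).2 ∧
    α * ((elt Γ u v i).1 - (elt Γ u v (i+1)).1) < 0 ∧
    (elt Γ u v (i+2)).1 = (elt Γ u v (i+1)).1 ∧
    β * ((elt Γ u v (i+2)).2 - (elt Γ u v (i+1)).2) < 0)

lemma sign_aux_h {α β : ℝ} (hα0 : α ≠ 0) {q p : Pt}
    (hle : α * q.1 + β * q.2 ≤ α * p.1 + β * p.2) (h2 : q.2 = p.2) (hne : q ≠ p) :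
    α * (q.1 - p.1) < 0 := by
  have hne1 : q.1 ≠ p.1 := fun hc => hne (Prod.ext hc h2)
  have h1 : β * q.2 = β * p.2 := by rw [h2]
  have h0 : α * (q.1 - p.1) ≤ 0 := by nlinarith [hle, h1]
  exact lt_of_le_of_ne h0 (mul_ne_zero hα0 (sub_ne_zero.mpr hne1))

lemma sign_aux_v {α β : ℝ} (hβ0 : β ≠ 0) {q p : Pt}
    (hle : α * q.1 + β * q.2 ≤ α * p.1 + β * p.2) (h1 : q.1 = p.1) (hne : q ≠ p) :
    β * (q.2 - p.2) < 0 := by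
  have hne2 : q.2 ≠ p.2 := fun hc => hne (Prod.ext h1 hc)
  have h1' : α * q.1 = α * p.1 := by rw [h1]
  have h0 : β * (q.2 - p.2) ≤ 0 := by nlinarith [hle, h1']
  exact lt_of_le_of_ne h0 (mul_ne_zero hβ0 (sub_ne_zero.mpr hne2))

lemma exists_token (α β : ℝ) (hα : α = 1 ∨ α = -1) (hβ : β = 1 ∨ β = -1) :
    ∃ (u v : Fin 4) (i : ℕ), u ≠ v ∧ i < (Γ.bends u v).length ∧ TokCond Γ α β u v i := by
  have hα0 : α ≠ 0 := by rcases hα with rfl | rfl <;> norm_num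
  have hβ0 : β ≠ 0 := by rcases hβ with rfl | rfl <;> norm_num
  obtain ⟨p, hp, hpmax⟩ := exists_fmax Γ α β
  have hmax : ∀ q ∈ corners Γ, α * q.1 + β * q.2 ≤ α * p.1 + β * p.2 := fun q hq => by
    rw [hpmax]; exact le_fmax Γ α β hq
  obtain ⟨u, v, huv, hmem⟩ := (mem_corners Γ).mp hp
  rw [ePts, List.mem_cons] at hmem
  rcases hmem with heq | hmem
  · subst heq; exact absurd hmax (by simpa using vertex_not_max Γ α β hα hβ u)
  rw [List.mem_append] at hmem
  rcases hmem with hB | hlast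
  swap
  · have heq : p = Γ.pos v := by simpa using hlast
    subst heq; exact absurd hmax (by simpa using vertex_not_max Γ α β hα hβ v)
  -- p is a bend: get its index
  obtain ⟨i, hieq⟩ := List.mem_iff_get.mp hB
  have hi : (i : ℕ) < (Γ.bends u v).length := i.isLt
  have hL : (ePts Γ u v).length = (Γ.bends u v).length + 2 := ePts_length Γ u v
  have hb0 : (i : ℕ) < (ePts Γ u v).length := by omega
  have hb1 : (i : ℕ) + 1 < (ePts Γ u v).length := by omega
  have hb2 : (i : ℕ) + 2 < (ePts Γ u v).length := by omega
  refine ⟨u, v, i, huv, hi, ?_⟩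
  have E0 : elt Γ u v i = (ePts Γ u v)[(i : ℕ)] := List.getD_eq_getElem _ default hb0
  have E1 : elt Γ u v ((i : ℕ)+1) = (ePts Γ u v)[(i : ℕ)+1] := List.getD_eq_getElem _ default hb1
  have E2 : elt Γ u v ((i : ℕ)+2) = (ePts Γ u v)[(i : ℕ)+2] := List.getD_eq_getElem _ default hb2
  -- the middle point is p
  have hmid : (ePts Γ u v)[(i : ℕ)+1] = p := by
    have h1 : (ePts Γ u v)[(i : ℕ)+1] =
        (Γ.bends u v ++ [Γ.pos v])[(i : ℕ)]'(by simp) := by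
      simp only [ePts]
      exact List.getElem_cons_succ ..
    rw [h1, List.getElem_append_left hi, ← List.get_eq_getElem]
    exact hieq
  -- neighbors are corners
  have hc0 : (ePts Γ u v)[(i : ℕ)] ∈ corners Γ :=
    (mem_corners Γ).mpr ⟨u, v, huv, List.getElem_mem hb0⟩
  have hc2 : (ePts Γ u v)[(i : ℕ)+2] ∈ corners Γ :=
    (mem_corners Γ).mpr ⟨u, v, huv, List.getElem_mem hb2⟩
  -- axis segments
  have hchain := chain_axis Γ huv
  simp only [List.Chain'] at hchain
  rw [List.isChain_iff_getElem] at hchain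
  have hax1 : AxisSeg (ePts Γ u v)[(i : ℕ)] (ePts Γ u v)[(i : ℕ)+1] := by
    have := hchain i (by omega)
    simpa [List.get_eq_getElem] using this
  have hax2 : AxisSeg (ePts Γ u v)[(i : ℕ)+1] (ePts Γ u v)[(i : ℕ)+2] := by
    have := hchain ((i : ℕ)+1) (by omega)
    simpa [List.get_eq_getElem] using this
  -- perpendicular corner
  have htrip : ((ePts Γ u v)[(i : ℕ)], (ePts Γ u v)[(i : ℕ)+1], (ePts Γ u v)[(i : ℕ)+2])
      ∈ triplesOf (ePts Γ u v) := by
    have hlt : (i : ℕ) < (triplesOf (ePts Γ u v)).length := by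
      simp only [triplesOf, List.length_zip, List.length_tail, hL]
      omega
    have heq2 : (triplesOf (ePts Γ u v))[(i : ℕ)] =
        ((ePts Γ u v)[(i : ℕ)], (ePts Γ u v)[(i : ℕ)+1], (ePts Γ u v)[(i : ℕ)+2]) := by
      simp only [triplesOf]
      rw [List.getElem_zip, List.getElem_zip, List.getElem_tail, List.getElem_tail,
        List.getElem_tail]
    rw [← heq2]
    exact List.getElem_mem hlt
  have hperp := alt_edge Γ huv _ htrip
  have hle0 := hmax _ hc0
  have hle2 := hmax _ hc2
  rw [← hmid] at hle0 hle2
  rcases hperp with ⟨h1, h2⟩ | ⟨h1, h2⟩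
  · refine Or.inl ?_
    rw [E0, E1, E2]
    exact ⟨h1, sign_aux_v hβ0 hle0 h1 hax1.1, h2.symm,
      sign_aux_h hα0 hle2 h2.symm (fun hc => hax2.1 hc.symm)⟩
  · refine Or.inr ?_
    rw [E0, E1, E2]
    exact ⟨h1, sign_aux_h hα0 hle0 h1 hax1.1, h2.symm,
      sign_aux_v hβ0 hle2 h2.symm (fun hc => hax2.1 hc.symm)⟩

lemma ePts_symm (u v : Fin 4) : ePts Γ v u = (ePts Γ u v).reverse := by
  simp [ePts, Γ.bends_symm u v, List.reverse_append]

lemma bends_symm_len (u v : Fin 4) : (Γ.bends v u).length = (Γ.bends u v).length := by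
  rw [Γ.bends_symm u v, List.length_reverse]

lemma elt_symm (u v : Fin 4) (k : ℕ) (hk : k < (Γ.bends u v).length + 2) :
    elt Γ v u ((Γ.bends u v).length + 1 - k) = elt Γ u v k := by
  have hL : (ePts Γ u v).length = (Γ.bends u v).length + 2 := ePts_length Γ u v
  have hk' : k < (ePts Γ u v).length := by omega
  have hk2 : (Γ.bends u v).length + 1 - k < (ePts Γ u v).reverse.length := by
    simp [hL]; omega
  rw [elt, elt, ePts_symm]
  rw [List.getD_eq_getElem _ default hk2, List.getD_eq_getElem _ default hk']
  rw [List.getElem_reverse]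
  congr 1
  simp [hL]
  omega

lemma tok_flip {α β : ℝ} {u v : Fin 4} {i : ℕ} (hi : i < (Γ.bends u v).length)
    (h : TokCond Γ α β u v i) :
    TokCond Γ α β v u ((Γ.bends u v).length - 1 - i) ∧
      (Γ.bends u v).length - 1 - i < (Γ.bends v u).length := by
  set n := (Γ.bends u v).length with hn
  have hlen : (Γ.bends v u).length = n := bends_symm_len Γ u v
  constructor
  swap
  · omega
  have F0 : elt Γ v u (n - 1 - i) = elt Γ u v (i + 2) := by
    have := elt_symm Γ u v (i + 2) (by omega)
    rw [← this]
    congr 1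
    omega
  have F1 : elt Γ v u (n - 1 - i + 1) = elt Γ u v (i + 1) := by
    have := elt_symm Γ u v (i + 1) (by omega)
    rw [← this]
    congr 1
    omega
  have F2 : elt Γ v u (n - 1 - i + 2) = elt Γ u v i := by
    have := elt_symm Γ u v i (by omega)
    rw [← this]
    congr 1
    omega
  rcases h with ⟨h1, h2, h3, h4⟩ | ⟨h1, h2, h3, h4⟩
  · exact Or.inr ⟨by rw [F0, F1]; exact h3, by rw [F0, F1]; exact h4,
      by rw [F2, F1]; exact h1, by rw [F2, F1]; exact h2⟩
  · exact Or.inl ⟨by rw [F0, F1]; exact h3, by rw [F0, F1]; exact h4,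
      by rw [F2, F1]; exact h1, by rw [F2, F1]; exact h2⟩

lemma exists_token_lt (α β : ℝ) (hα : α = 1 ∨ α = -1) (hβ : β = 1 ∨ β = -1) :
    ∃ (u v : Fin 4) (i : ℕ), u < v ∧ i < (Γ.bends u v).length ∧ TokCond Γ α β u v i := by
  obtain ⟨u, v, i, huv, hi, hc⟩ := exists_token Γ α β hα hβ
  rcases lt_or_gt_of_ne huv with h | h
  · exact ⟨u, v, i, h, hi, hc⟩
  · obtain ⟨hc', hi'⟩ := tok_flip Γ hi hc
    exact ⟨v, u, _, h, hi', hc'⟩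

lemma tok_incompat {α β α' β' : ℝ} (hα : α = 1 ∨ α = -1) (hβ : β = 1 ∨ β = -1)
    (hα' : α' = 1 ∨ α' = -1) (hβ' : β' = 1 ∨ β' = -1) (hne : ¬(α = α' ∧ β = β'))
    {u v : Fin 4} {i : ℕ} (h : TokCond Γ α β u v i) (h' : TokCond Γ α' β' u v i) :
    False := by
  rcases h with ⟨e1, s1, e2, s2⟩ | ⟨e1, s1, e2, s2⟩ <;>
    rcases h' with ⟨f1, t1, f2, t2⟩ | ⟨f1, t1, f2, t2⟩
  · rcases hα with rfl | rfl <;> rcases hβ with rfl | rfl <;>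
      rcases hα' with rfl | rfl <;> rcases hβ' with rfl | rfl <;>
      first
        | exact hne ⟨rfl, rfl⟩
        | linarith
  · rw [f1, sub_self, mul_zero] at s1
    exact lt_irrefl 0 s1
  · rw [e1, sub_self, mul_zero] at t1
    exact lt_irrefl 0 t1
  · rcases hα with rfl | rfl <;> rcases hβ with rfl | rfl <;>
      rcases hα' with rfl | rfl <;> rcases hβ' with rfl | rfl <;>
      first
        | exact hne ⟨rfl, rfl⟩
        | linarith

lemma tok_distinct {α β α' β' : ℝ} (hα : α = 1 ∨ α = -1) (hβ : β = 1 ∨ β = -1)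
    (hα' : α' = 1 ∨ α' = -1) (hβ' : β' = 1 ∨ β' = -1) (hne : ¬(α = α' ∧ β = β'))
    {u v u' v' : Fin 4} {i i' : ℕ} (hlt : u < v) (hlt' : u' < v')
    (h : TokCond Γ α β u v i) (h' : TokCond Γ α' β' u' v' i') :
    (s(u, v), i) ≠ (s(u', v'), i') := by
  intro heq
  rw [Prod.mk.injEq] at heq
  obtain ⟨h1, h2⟩ := heq
  rw [Sym2.eq_iff] at h1
  rcases h1 with ⟨rfl, rfl⟩ | ⟨rfl, rfl⟩
  · subst h2
    exact tok_incompat Γ hα hβ hα' hβ' hne h h'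
  · exact absurd hlt (lt_asymm hlt')

/-- Part 1: at least four bends in total. -/
lemma four_le_totalBends : 4 ≤ Γ.toPolyDrawing.totalBends := by
  classical
  obtain ⟨u1, v1, i1, hlt1, hi1, hc1⟩ := exists_token_lt Γ 1 1 (Or.inl rfl) (Or.inl rfl)
  obtain ⟨u2, v2, i2, hlt2, hi2, hc2⟩ := exists_token_lt Γ 1 (-1) (Or.inl rfl) (Or.inr rfl)
  obtain ⟨u3, v3, i3, hlt3, hi3, hc3⟩ := exists_token_lt Γ (-1) 1 (Or.inr rfl) (Or.inl rfl)
  obtain ⟨u4, v4, i4, hlt4, hi4, hc4⟩ := exists_token_lt Γ (-1) (-1) (Or.inr rfl) (Or.inr rfl)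
  have hbc : ∀ (u v : Fin 4), Γ.toPolyDrawing.bendCount s(u, v) = (Γ.bends u v).length :=
    fun u v => rfl
  set E : Finset (Sym2 (Fin 4)) := (Set.toFinite (⊤ : SimpleGraph (Fin 4)).edgeSet).toFinset
    with hE
  set S : Finset (Sym2 (Fin 4) × ℕ) :=
    E.biUnion (fun e => (Finset.range (Γ.toPolyDrawing.bendCount e)).image (fun k => (e, k)))
    with hS
  have hScard : S.card = Γ.toPolyDrawing.totalBends := by
    rw [hS, Finset.card_biUnion]
    · apply Finset.sum_congr rfl
      intro e _
      rw [Finset.card_image_of_injective _ (fun a b hab => by simpa using hab),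
        Finset.card_range]
    · intro x _ y _ hxy
      simp only [Function.onFun]
      rw [Finset.disjoint_left]
      rintro ⟨e, k⟩ hx hy
      rw [Finset.mem_image] at hx hy
      obtain ⟨a, _, ha⟩ := hx
      obtain ⟨b, _, hb⟩ := hy
      apply hxy
      have ha' := congrArg Prod.fst ha
      have hb' := congrArg Prod.fst hb
      simp only [] at ha' hb'
      rw [ha', ← hb']
  have hmemS : ∀ (u v : Fin 4) (i : ℕ), u < v → i < (Γ.bends u v).length →
      (s(u, v), i) ∈ S := by
    intro u v i hlt hi
    rw [hS, Finset.mem_biUnion]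
    refine ⟨s(u, v), ?_, ?_⟩
    · rw [hE, Set.Finite.mem_toFinset, SimpleGraph.mem_edgeSet]
      simpa using hlt.ne
    · rw [Finset.mem_image]
      exact ⟨i, by rw [Finset.mem_range, hbc]; exact hi, rfl⟩
  set T : Finset (Sym2 (Fin 4) × ℕ) :=
    {(s(u1, v1), i1), (s(u2, v2), i2), (s(u3, v3), i3), (s(u4, v4), i4)} with hT
  have hTS : T ⊆ S := by
    intro x hx
    rw [hT] at hx
    simp only [Finset.mem_insert, Finset.mem_singleton] at hx
    rcases hx with rfl | rfl | rfl | rfl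
    · exact hmemS _ _ _ hlt1 hi1
    · exact hmemS _ _ _ hlt2 hi2
    · exact hmemS _ _ _ hlt3 hi3
    · exact hmemS _ _ _ hlt4 hi4
  have h12 := tok_distinct Γ (Or.inl rfl) (Or.inl rfl) (Or.inl rfl) (Or.inr rfl)
    (by norm_num) hlt1 hlt2 hc1 hc2
  have h13 := tok_distinct Γ (Or.inl rfl) (Or.inl rfl) (Or.inr rfl) (Or.inl rfl)
    (by norm_num) hlt1 hlt3 hc1 hc3
  have h14 := tok_distinct Γ (Or.inl rfl) (Or.inl rfl) (Or.inr rfl) (Or.inr rfl)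
    (by norm_num) hlt1 hlt4 hc1 hc4
  have h23 := tok_distinct Γ (Or.inl rfl) (Or.inr rfl) (Or.inr rfl) (Or.inl rfl)
    (by norm_num) hlt2 hlt3 hc2 hc3
  have h24 := tok_distinct Γ (Or.inl rfl) (Or.inr rfl) (Or.inr rfl) (Or.inr rfl)
    (by norm_num) hlt2 hlt4 hc2 hc4
  have h34 := tok_distinct Γ (Or.inr rfl) (Or.inl rfl) (Or.inr rfl) (Or.inr rfl)
    (by norm_num) hlt3 hlt4 hc3 hc4
  have hTcard : T.card = 4 := by
    rw [hT]
    rw [Finset.card_insert_of_notMem (by simp [h12, h13, h14]),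
      Finset.card_insert_of_notMem (by simp [h23, h24]),
      Finset.card_insert_of_notMem (by simp [h34]),
      Finset.card_singleton]
  calc 4 = T.card := hTcard.symm
    _ ≤ S.card := Finset.card_le_card hTS
    _ = _ := hScard

lemma not_all_x_eq : ¬ ∀ p ∈ corners Γ, ∀ q ∈ corners Γ, p.1 = q.1 := by
  intro h
  apply three_pigeon Γ 0 ((0 : ℝ), 1) ((0 : ℝ), -1)
  intro x hx
  have hax := axis_first Γ (Ne.symm hx)
  obtain ⟨hne, hor⟩ := hax
  have hq1 : (nxt Γ 0 x).1 = (Γ.pos 0).1 :=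
    h _ (nxt_mem_corners Γ (Ne.symm hx)) _ (pos_mem_corners Γ 0)
  have hy : (nxt Γ 0 x).2 ≠ (Γ.pos 0).2 := by
    intro hc
    rcases hor with h1 | h2
    · exact hne (Prod.ext hq1.symm hc.symm)
    · exact hne (Prod.ext hq1.symm hc.symm)
  rcases lt_or_gt_of_ne hy with hlt | hgt
  · refine ⟨(Γ.pos 0).2 - (nxt Γ 0 x).2, by linarith, Or.inr ?_⟩
    refine Prod.ext (by simpa using hq1) ?_
    show (nxt Γ 0 x).2 = (Γ.pos 0).2 + ((Γ.pos 0).2 - (nxt Γ 0 x).2) * (-1)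
    ring
  · refine ⟨(nxt Γ 0 x).2 - (Γ.pos 0).2, by linarith, Or.inl ?_⟩
    refine Prod.ext (by simpa using hq1) ?_
    show (nxt Γ 0 x).2 = (Γ.pos 0).2 + ((nxt Γ 0 x).2 - (Γ.pos 0).2) * 1
    ring

lemma not_all_y_eq : ¬ ∀ p ∈ corners Γ, ∀ q ∈ corners Γ, p.2 = q.2 := by
  intro h
  apply three_pigeon Γ 0 ((1 : ℝ), 0) ((-1 : ℝ), 0)
  intro x hx
  have hax := axis_first Γ (Ne.symm hx)
  obtain ⟨hne, hor⟩ := hax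
  have hq2 : (nxt Γ 0 x).2 = (Γ.pos 0).2 :=
    h _ (nxt_mem_corners Γ (Ne.symm hx)) _ (pos_mem_corners Γ 0)
  have hy : (nxt Γ 0 x).1 ≠ (Γ.pos 0).1 := by
    intro hc
    rcases hor with h1 | h2
    · exact hne (Prod.ext hc.symm hq2.symm)
    · exact hne (Prod.ext hc.symm hq2.symm)
  rcases lt_or_gt_of_ne hy with hlt | hgt
  · refine ⟨(Γ.pos 0).1 - (nxt Γ 0 x).1, by linarith, Or.inr ?_⟩
    refine Prod.ext ?_ (by simpa using hq2)
    show (nxt Γ 0 x).1 = (Γ.pos 0).1 + ((Γ.pos 0).1 - (nxt Γ 0 x).1) * (-1)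
    ring
  · refine ⟨(nxt Γ 0 x).1 - (Γ.pos 0).1, by linarith, Or.inl ?_⟩
    refine Prod.ext ?_ (by simpa using hq2)
    show (nxt Γ 0 x).1 = (Γ.pos 0).1 + ((nxt Γ 0 x).1 - (Γ.pos 0).1) * 1
    ring

lemma mem_horiz_seg {m X x' t : ℝ} (h1 : m ≤ x') (h2 : x' ≤ X) :
    ((x', t) : Pt) ∈ segment ℝ ((X, t) : Pt) ((m, t) : Pt) := by
  rw [segment_symm]
  have h := seg_param ((m, t) : Pt) ((1, 0) : Pt) (s := x' - m) (t := X - m)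
    (by linarith) (by linarith)
  have e1 : ((m, t) : Pt) + (x' - m) • ((1, 0) : Pt) = (x', t) := by
    rw [Prod.smul_mk, Prod.mk_add_mk, Prod.mk.injEq]
    constructor
    · show m + (x' - m) * 1 = x'
      ring
    · show t + (x' - m) * 0 = t
      ring
  have e2 : ((m, t) : Pt) + (X - m) • ((1, 0) : Pt) = (X, t) := by
    rw [Prod.smul_mk, Prod.mk_add_mk, Prod.mk.injEq]
    constructor
    · show m + (X - m) * 1 = X
      ring
    · show t + (X - m) * 0 = t
      ring
  rwa [e1, e2] at h

lemma mem_vert_seg {w Y y' x : ℝ} (h1 : w ≤ y') (h2 : y' ≤ Y) :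
    ((x, y') : Pt) ∈ segment ℝ ((x, Y) : Pt) ((x, w) : Pt) := by
  rw [segment_symm]
  have h := seg_param ((x, w) : Pt) ((0, 1) : Pt) (s := y' - w) (t := Y - w)
    (by linarith) (by linarith)
  have e1 : ((x, w) : Pt) + (y' - w) • ((0, 1) : Pt) = (x, y') := by
    rw [Prod.smul_mk, Prod.mk_add_mk, Prod.mk.injEq]
    constructor
    · show x + (y' - w) * 0 = x
      ring
    · show w + (y' - w) * 1 = y'
      ring
  have e2 : ((x, w) : Pt) + (Y - w) • ((0, 1) : Pt) = (x, Y) := by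
    rw [Prod.smul_mk, Prod.mk_add_mk, Prod.mk.injEq]
    constructor
    · show x + (Y - w) * 0 = x
      ring
    · show w + (Y - w) * 1 = Y
      ring
  rwa [e1, e2] at h

/-- If all edges have at most one bend, any achieved x-value of a corner forces a
vertex on that vertical line, provided the corner achieving it is extremal...
Actually: any corner value achieved by a corner point is achieved by a vertex
(via the perpendicular corner condition). -/
lemma wall_x (hb : ∀ u v : Fin 4, u ≠ v → (Γ.bends u v).length ≤ 1) (s : ℝ)
    (h : ∃ p ∈ corners Γ, p.1 = s) : ∃ a : Fin 4, (Γ.pos a).1 = s := by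
  obtain ⟨p, hp, hps⟩ := h
  obtain ⟨u, v, huv, hmem⟩ := (mem_corners Γ).mp hp
  rcases hlen : Γ.bends u v with _ | ⟨mp, rest⟩
  · have : p = Γ.pos u ∨ p = Γ.pos v := by
      have := hmem
      rw [ePts, hlen] at this
      simpa using this
    rcases this with rfl | rfl
    · exact ⟨u, hps⟩
    · exact ⟨v, hps⟩
  · have hrest : rest = [] := by
      have := hb u v huv
      rw [hlen] at this
      simpa using this
    subst hrest
    have hmem' : p = Γ.pos u ∨ p = mp ∨ p = Γ.pos v := by
      have := hmem
      rw [ePts, hlen] at this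
      simpa using this
    rcases hmem' with rfl | rfl | rfl
    · exact ⟨u, hps⟩
    · have htrip : (Γ.pos u, p, Γ.pos v) ∈ triplesOf (ePts Γ u v) := by
        rw [ePts, hlen]
        simp [triplesOf]
      have hperp := alt_edge Γ huv _ htrip
      rcases hperp with ⟨h1, _⟩ | ⟨_, h2⟩
      · exact ⟨u, by rw [h1, hps]⟩
      · exact ⟨v, by rw [← h2, hps]⟩
    · exact ⟨v, hps⟩

lemma wall_y (hb : ∀ u v : Fin 4, u ≠ v → (Γ.bends u v).length ≤ 1) (s : ℝ)
    (h : ∃ p ∈ corners Γ, p.2 = s) : ∃ a : Fin 4, (Γ.pos a).2 = s := by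
  obtain ⟨p, hp, hps⟩ := h
  obtain ⟨u, v, huv, hmem⟩ := (mem_corners Γ).mp hp
  rcases hlen : Γ.bends u v with _ | ⟨mp, rest⟩
  · have : p = Γ.pos u ∨ p = Γ.pos v := by
      have := hmem
      rw [ePts, hlen] at this
      simpa using this
    rcases this with rfl | rfl
    · exact ⟨u, hps⟩
    · exact ⟨v, hps⟩
  · have hrest : rest = [] := by
      have := hb u v huv
      rw [hlen] at this
      simpa using this
    subst hrest
    have hmem' : p = Γ.pos u ∨ p = mp ∨ p = Γ.pos v := by
      have := hmem
      rw [ePts, hlen] at this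
      simpa using this
    rcases hmem' with rfl | rfl | rfl
    · exact ⟨u, hps⟩
    · have htrip : (Γ.pos u, p, Γ.pos v) ∈ triplesOf (ePts Γ u v) := by
        rw [ePts, hlen]
        simp [triplesOf]
      have hperp := alt_edge Γ huv _ htrip
      rcases hperp with ⟨_, h2⟩ | ⟨h1, _⟩
      · exact ⟨v, by rw [← h2, hps]⟩
      · exact ⟨u, by rw [h1, hps]⟩
    · exact ⟨v, hps⟩

/-- Part 2 kernel: it is impossible that every edge has at most one bend. -/
lemma no_all_short (hb : ∀ u v : Fin 4, u ≠ v → (Γ.bends u v).length ≤ 1) : False := by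
  classical
  -- the four walls
  have hXle : ∀ q ∈ corners Γ, q.1 ≤ fmax Γ 1 0 := fun q hq => by
    have := le_fmax Γ 1 0 hq
    linarith
  have hMle : ∀ q ∈ corners Γ, -(fmax Γ (-1) 0) ≤ q.1 := fun q hq => by
    have := le_fmax Γ (-1) 0 hq
    linarith
  have hYle : ∀ q ∈ corners Γ, q.2 ≤ fmax Γ 0 1 := fun q hq => by
    have := le_fmax Γ 0 1 hq
    linarith
  have hWle : ∀ q ∈ corners Γ, -(fmax Γ 0 (-1)) ≤ q.2 := fun q hq => by
    have := le_fmax Γ 0 (-1) hq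
    linarith
  obtain ⟨a, ha⟩ : ∃ a : Fin 4, (Γ.pos a).1 = fmax Γ 1 0 := by
    apply wall_x Γ hb
    obtain ⟨p, hp, hpe⟩ := exists_fmax Γ 1 0
    exact ⟨p, hp, by linarith⟩
  obtain ⟨b, hbw⟩ : ∃ b : Fin 4, (Γ.pos b).1 = -(fmax Γ (-1) 0) := by
    apply wall_x Γ hb
    obtain ⟨p, hp, hpe⟩ := exists_fmax Γ (-1) 0
    exact ⟨p, hp, by linarith⟩
  obtain ⟨c, hc⟩ : ∃ c : Fin 4, (Γ.pos c).2 = fmax Γ 0 1 := by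
    apply wall_y Γ hb
    obtain ⟨p, hp, hpe⟩ := exists_fmax Γ 0 1
    exact ⟨p, hp, by linarith⟩
  obtain ⟨d, hd⟩ : ∃ d : Fin 4, (Γ.pos d).2 = -(fmax Γ 0 (-1)) := by
    apply wall_y Γ hb
    obtain ⟨p, hp, hpe⟩ := exists_fmax Γ 0 (-1)
    exact ⟨p, hp, by linarith⟩
  -- distinctness
  have hac : a ≠ c := by
    intro h
    apply vertex_not_max Γ 1 1 (Or.inl rfl) (Or.inl rfl) a
    intro q hq
    have h1 := hXle q hq
    have h2 := hYle q hq
    have h3 : (Γ.pos a).2 = fmax Γ 0 1 := by rw [h]; exact hc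
    rw [ha] at *
    linarith [h3]
  have had : a ≠ d := by
    intro h
    apply vertex_not_max Γ 1 (-1) (Or.inl rfl) (Or.inr rfl) a
    intro q hq
    have h1 := hXle q hq
    have h2 := hWle q hq
    have h3 : (Γ.pos a).2 = -(fmax Γ 0 (-1)) := by rw [h]; exact hd
    nlinarith [h3, ha]
  have hbc : b ≠ c := by
    intro h
    apply vertex_not_max Γ (-1) 1 (Or.inr rfl) (Or.inl rfl) b
    intro q hq
    have h1 := hMle q hq
    have h2 := hYle q hq
    have h3 : (Γ.pos b).2 = fmax Γ 0 1 := by rw [h]; exact hc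
    nlinarith [h3, hbw]
  have hbd : b ≠ d := by
    intro h
    apply vertex_not_max Γ (-1) (-1) (Or.inr rfl) (Or.inr rfl) b
    intro q hq
    have h1 := hMle q hq
    have h2 := hWle q hq
    have h3 : (Γ.pos b).2 = -(fmax Γ 0 (-1)) := by rw [h]; exact hd
    nlinarith [h3, hbw]
  have hXM : fmax Γ 1 0 ≠ -(fmax Γ (-1) 0) := by
    intro h
    apply not_all_x_eq Γ
    intro p hp q hq
    have := hXle p hp
    have := hMle p hp
    have := hXle q hq
    have := hMle q hq
    linarith
  have hYW : fmax Γ 0 1 ≠ -(fmax Γ 0 (-1)) := by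
    intro h
    apply not_all_y_eq Γ
    intro p hp q hq
    have := hYle p hp
    have := hWle p hp
    have := hYle q hq
    have := hWle q hq
    linarith
  have hab : a ≠ b := fun h => hXM (by rw [← ha, h, hbw])
  have hcd : c ≠ d := fun h => hYW (by rw [← hc, h, hd])
  -- edge (a,b) contains a full-width horizontal segment
  have hposa : Γ.pos a = (fmax Γ 1 0, (Γ.pos a).2) := Prod.ext ha rfl
  have hposb : Γ.pos b = (-(fmax Γ (-1) 0), (Γ.pos b).2) := Prod.ext hbw rfl
  have hposc : Γ.pos c = ((Γ.pos c).1, fmax Γ 0 1) := Prod.ext rfl hc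
  have hposd : Γ.pos d = ((Γ.pos d).1, -(fmax Γ 0 (-1))) := Prod.ext rfl hd
  have hAB : ∃ t : ℝ, -(fmax Γ 0 (-1)) ≤ t ∧ t ≤ fmax Γ 0 1 ∧
      ∀ x' : ℝ, -(fmax Γ (-1) 0) ≤ x' → x' ≤ fmax Γ 1 0 →
        ((x', t) : Pt) ∈ chainTrace (ePts Γ a b) := by
    have hamem := pos_mem_corners Γ a
    have hbmem := pos_mem_corners Γ b
    rcases hlen : Γ.bends a b with _ | ⟨mp, rest⟩
    · -- straight edge
      have hnxt : nxt Γ a b = Γ.pos b := by rw [nxt, hlen]; rfl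
      have hax := axis_first Γ hab
      rw [hnxt] at hax
      rcases hax.2 with h1 | h2
      · exact absurd (by rw [← ha, h1, hbw]) hXM
      · refine ⟨(Γ.pos a).2, hWle _ hamem, hYle _ hamem, fun x' hx1 hx2 => ?_⟩
        apply seg_first_sub Γ a b
        rw [hnxt, hposa]
        rw [hposb, ← h2]
        exact mem_horiz_seg hx1 hx2
    · have hrest : rest = [] := by
        have := hb a b hab
        rw [hlen] at this
        simpa using this
      subst hrest
      have htrip : (Γ.pos a, mp, Γ.pos b) ∈ triplesOf (ePts Γ a b) := by
        rw [ePts, hlen]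
        simp [triplesOf]
      have hperp := alt_edge Γ hab _ htrip
      rcases hperp with ⟨h1, h2⟩ | ⟨h1, h2⟩
      · -- second segment horizontal at height (pos b).2
        refine ⟨(Γ.pos b).2, hWle _ hbmem, hYle _ hbmem, fun x' hx1 hx2 => ?_⟩
        have hmp : mp = (fmax Γ 1 0, (Γ.pos b).2) := Prod.ext (by rw [← h1, ha]) h2
        have hsegm : (mp, Γ.pos b) ∈ segsOf (ePts Γ a b) := by
          rw [ePts, hlen]
          simp [segsOf]
        apply Set.mem_iUnion₂.mpr ⟨(mp, Γ.pos b), hsegm, ?_⟩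
        rw [hmp, hposb]
        exact mem_horiz_seg hx1 hx2
      · -- first segment horizontal at height (pos a).2
        refine ⟨(Γ.pos a).2, hWle _ hamem, hYle _ hamem, fun x' hx1 hx2 => ?_⟩
        have hmp : mp = (-(fmax Γ (-1) 0), (Γ.pos a).2) := Prod.ext (by rw [h2, hbw]) h1.symm
        have hsegm : (Γ.pos a, mp) ∈ segsOf (ePts Γ a b) := by
          rw [ePts, hlen]
          simp [segsOf]
        apply Set.mem_iUnion₂.mpr ⟨(Γ.pos a, mp), hsegm, ?_⟩
        rw [hmp, hposa]
        exact mem_horiz_seg hx1 hx2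
  -- edge (c,d) contains a full-height vertical segment
  have hCD : ∃ x' : ℝ, -(fmax Γ (-1) 0) ≤ x' ∧ x' ≤ fmax Γ 1 0 ∧
      ∀ t' : ℝ, -(fmax Γ 0 (-1)) ≤ t' → t' ≤ fmax Γ 0 1 →
        ((x', t') : Pt) ∈ chainTrace (ePts Γ c d) := by
    have hcmem := pos_mem_corners Γ c
    have hdmem := pos_mem_corners Γ d
    rcases hlen : Γ.bends c d with _ | ⟨mp, rest⟩
    · have hnxt : nxt Γ c d = Γ.pos d := by rw [nxt, hlen]; rfl
      have hax := axis_first Γ hcd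
      rw [hnxt] at hax
      rcases hax.2 with h1 | h2
      · refine ⟨(Γ.pos c).1, hMle _ hcmem, hXle _ hcmem, fun t' ht1 ht2 => ?_⟩
        apply seg_first_sub Γ c d
        rw [hnxt, hposc]
        rw [hposd, ← h1]
        exact mem_vert_seg ht1 ht2
      · exact absurd (by rw [← hc, h2, hd]) hYW
    · have hrest : rest = [] := by
        have := hb c d hcd
        rw [hlen] at this
        simpa using this
      subst hrest
      have htrip : (Γ.pos c, mp, Γ.pos d) ∈ triplesOf (ePts Γ c d) := by
        rw [ePts, hlen]
        simp [triplesOf]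
      have hperp := alt_edge Γ hcd _ htrip
      rcases hperp with ⟨h1, h2⟩ | ⟨h1, h2⟩
      · -- first segment vertical at (pos c).1
        refine ⟨(Γ.pos c).1, hMle _ hcmem, hXle _ hcmem, fun t' ht1 ht2 => ?_⟩
        have hmp : mp = ((Γ.pos c).1, -(fmax Γ 0 (-1))) := Prod.ext h1.symm (by rw [h2, hd])
        have hsegm : (Γ.pos c, mp) ∈ segsOf (ePts Γ c d) := by
          rw [ePts, hlen]
          simp [segsOf]
        apply Set.mem_iUnion₂.mpr ⟨(Γ.pos c, mp), hsegm, ?_⟩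
        rw [hmp, hposc]
        exact mem_vert_seg ht1 ht2
      · -- second segment vertical at (pos d).1
        refine ⟨(Γ.pos d).1, hMle _ hdmem, hXle _ hdmem, fun t' ht1 ht2 => ?_⟩
        have hmp : mp = ((Γ.pos d).1, fmax Γ 0 1) := Prod.ext h2 (by rw [← h1, hc])
        have hsegm : (mp, Γ.pos d) ∈ segsOf (ePts Γ c d) := by
          rw [ePts, hlen]
          simp [segsOf]
        apply Set.mem_iUnion₂.mpr ⟨(mp, Γ.pos d), hsegm, ?_⟩
        rw [hmp, hposd]
        exact mem_vert_seg ht1 ht2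
  obtain ⟨t, ht1, ht2, hABseg⟩ := hAB
  obtain ⟨x', hx1, hx2, hCDseg⟩ := hCD
  have hin1 : ((x', t) : Pt) ∈ chainTrace (ePts Γ a b) := hABseg x' hx1 hx2
  have hin2 : ((x', t) : Pt) ∈ chainTrace (ePts Γ c d) := hCDseg t ht1 ht2
  have hne : s(a, b) ≠ s(c, d) := by
    rw [Ne, Sym2.eq_iff]
    push_neg
    exact ⟨fun _ h2 => hbd h2, fun _ h2 => hbc h2⟩
  have key := Γ.edges_disjoint a b c d (by simpa using hab) (by simpa using hcd) hne
    ⟨hin1, hin2⟩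
  obtain ⟨ω, ⟨hω1, hω2⟩, _⟩ := key
  rcases hω1 with rfl | rfl <;> rcases hω2 with h | h
  · exact hac h
  · exact had h
  · exact hbc h
  · exact hbd h

end K4Proof

/-- Every planar orthogonal drawing of `K₄` has at least four bends in
total and contains an edge with at least two bends. -/
theorem K4_ortho_drawing_lower_bounds
    (Γ : OrthoDrawing (⊤ : SimpleGraph (Fin 4))) :
    4 ≤ Γ.toPolyDrawing.totalBends ∧
    ∃ u v : Fin 4, (⊤ : SimpleGraph (Fin 4)).Adj u v ∧ 2 ≤ (Γ.bends u v).length := by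
  constructor
  · exact K4Proof.four_le_totalBends Γ
  · by_contra hcon
    push_neg at hcon
    apply K4Proof.no_all_short Γ
    intro u v huv
    have := hcon u v (by simpa using huv)
    omega
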